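/- Let f be an α-SDS k-set function on a finite set V with n = |V| and g(X) = (α^{|X| - n - 1} · |X| / n) · f(X, ∅, ..., ∅). Then g (n·α^{n+1})-approximates f: for all pairwise disjoint X₁, ..., X_k ⊆ V, g(X₁ ∪ ⋯ ∪ X_k) ≤ f(X₁, ..., X_k) ≤ n·α^{n+1} · g(X₁ ∪ ⋯ ∪ X_k). -/

import Mathlib

/-- For an α-SDS (k+1)-set function `f` on `V` with `n = |V|`, the set function
`g X = (α^(|X| - n - 1) · |X| / n) · f (X, ∅, …, ∅)` (n·α^(n+1))-approximates f. -/
theorem sds_g_approximates {V : Type*} [Fintype V] [DecidableEq V] [Nonempty V]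
    (k : ℕ) (n : ℕ) (hn : n = Fintype.card V)
    (f : (Fin (k + 1) → Finset V) → WithTop ℚ) (α : ℚ) (hα : 1 ≤ α)
    -- f is normalised
    (hempty : f (fun _ => ∅) = 0)
    (hnonneg : ∀ X : Fin (k + 1) → Finset V, 0 ≤ f X)
    -- f is α-SIM
    (hsim : ∀ X Y : Fin (k + 1) → Finset V,
      Pairwise (Function.onFun Disjoint X) → Pairwise (Function.onFun Disjoint Y) →
      Finset.univ.biUnion X = Finset.univ.biUnion Y →
      f X ≤ ((α : WithTop ℚ)) * f Y)
    -- f is α-SDS: all 2(k+1) sets pairwise disjoint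
    (hsds : ∀ X Y : Fin (k + 1) → Finset V,
      Pairwise (Function.onFun Disjoint X) → Pairwise (Function.onFun Disjoint Y) →
      (∀ i j : Fin (k + 1), Disjoint (X i) (Y j)) →
      f X ≤ ((α : WithTop ℚ)) * f (fun i => X i ∪ Y i))
    -- the definition of g
    (g : Finset V → WithTop ℚ)
    (hg : ∀ X : Finset V,
      g X = (((α ^ ((X.card : ℤ) - n - 1) * X.card / n : ℚ)) : WithTop ℚ) *
        f (fun i => if i = 0 then X else ∅)) :
    -- g is a superadditive set function
    -- g (n·α^(n+1))-approximates f
    ∀ X : Fin (k + 1) → Finset V, Pairwise (Function.onFun Disjoint X) →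
      g (Finset.univ.biUnion X) ≤ f X ∧
      f X ≤ (((n * α ^ (n + 1) : ℚ)) : WithTop ℚ) * g (Finset.univ.biUnion X) := by
  intro X hX
  have hαpos : (0 : ℚ) < α := lt_of_lt_of_le one_pos hα
  have hα0 : α ≠ 0 := ne_of_gt hαpos
  have hn1 : 1 ≤ n := by
    rw [hn]; exact Fintype.card_pos
  set U : Finset V := Finset.univ.biUnion X with hU
  set ind : Fin (k + 1) → Finset V := fun i => if i = 0 then U else ∅ with hind
  have hind_disj : Pairwise (Function.onFun Disjoint ind) := by
    intro i j hij
    simp only [Function.onFun, hind]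
    by_cases hi : i = 0
    · have hj : ¬ j = 0 := by rintro rfl; exact hij hi
      simp [hi, hj]
    · simp [hi]
  have hU' : Finset.univ.biUnion ind = U := by
    ext v
    simp only [hind, Finset.mem_biUnion, Finset.mem_univ, true_and]
    constructor
    · rintro ⟨i, hi⟩
      by_cases h0 : i = 0
      · simpa [h0] using hi
      · simp [h0] at hi
    · intro hv; exact ⟨0, by simp [hv]⟩
  have hF_le : f ind ≤ (α : WithTop ℚ) * f X := hsim ind X hind_disj hX (hU'.trans hU)
  have hX_le : f X ≤ (α : WithTop ℚ) * f ind := hsim X ind hX hind_disj (hU ▸ hU'.symm)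
  have hgU : g U = ((α ^ ((U.card : ℤ) - n - 1) * U.card / n : ℚ) : WithTop ℚ) * f ind :=
    hg U
  by_cases hUe : U = ∅
  · -- degenerate case: everything is empty
    have hXe : X = fun _ => ∅ := by
      funext i
      have hsub : X i ⊆ U := hU ▸ Finset.subset_biUnion_of_mem X (Finset.mem_univ i)
      rw [hUe] at hsub
      exact Finset.subset_empty.mp hsub
    have hinde : ind = fun _ => ∅ := by
      funext i; simp [hind, hUe]
    have hfX : f X = 0 := by rw [hXe, hempty]
    have hfind : f ind = 0 := by rw [hinde, hempty]
    rw [hgU, hfind, hfX, mul_zero]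
    exact ⟨le_refl _, by rw [mul_zero]⟩
  · -- main case : U nonempty
    set m : ℕ := U.card with hm
    have hm1 : 1 ≤ m := Finset.card_pos.mpr (Finset.nonempty_iff_ne_empty.mpr hUe)
    have hmn : m ≤ n := by
      rw [hn, hm]; exact Finset.card_le_univ U
    set c : ℚ := α ^ ((m : ℤ) - n - 1) * m / n with hc
    have hcpos : 0 < c := by
      apply div_pos (mul_pos (zpow_pos hαpos _) (by exact_mod_cast hm1))
      exact_mod_cast hn1
    -- c ≤ α⁻¹
    have hcinv : c ≤ α⁻¹ := by
      have h1 : α ^ ((m : ℤ) - n - 1) ≤ α ^ (-1 : ℤ) := by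
        apply zpow_le_zpow_right₀ hα
        have : (m : ℤ) ≤ (n : ℤ) := by exact_mod_cast hmn
        omega
      have h2 : (m : ℚ) / n ≤ 1 := by
        rw [div_le_one (by exact_mod_cast hn1 : (0:ℚ) < n)]
        exact_mod_cast hmn
      have h3 : c = α ^ ((m : ℤ) - n - 1) * ((m : ℚ) / n) := by
        rw [hc]; ring
      rw [h3]
      calc α ^ ((m : ℤ) - n - 1) * ((m : ℚ) / n)
          ≤ α ^ (-1 : ℤ) * 1 := by
            apply mul_le_mul h1 h2 (by positivity) (by positivity)
        _ = α⁻¹ := by rw [mul_one, zpow_neg_one]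
    -- n·α^(n+1)·c ≥ α
    have hKc : α ≤ (n * α ^ (n + 1)) * c := by
      have hKceq : (n * α ^ (n + 1)) * c = α ^ (m : ℤ) * m := by
        have key : α ^ ((m : ℤ) - n - 1) * α ^ (((n + 1 : ℕ) : ℤ)) = α ^ (m : ℤ) := by
          rw [← zpow_add₀ hα0]; congr 1; push_cast; ring
        rw [hc]
        have hne : (n : ℚ) ≠ 0 := by positivity
        field_simp
        rw [← zpow_natCast α (n + 1)]
        linear_combination key
      rw [hKceq]
      have h1 : α ^ (1 : ℤ) ≤ α ^ (m : ℤ) := by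
        apply zpow_le_zpow_right₀ hα
        exact_mod_cast hm1
      calc α = α ^ (1 : ℤ) * 1 := by rw [zpow_one, mul_one]
        _ ≤ α ^ (m : ℤ) * m := by
            apply mul_le_mul h1 (by exact_mod_cast hm1) one_pos.le
            positivity
    -- now split on whether f ind is ⊤
    rcases eq_or_ne (f ind) ⊤ with hT | hT
    · -- f ind = ⊤, then f X = ⊤ and g U = ⊤
      have hfX : f X = ⊤ := by
        by_contra h
        have hfin : (α : WithTop ℚ) * f X ≠ ⊤ := by
          rcases WithTop.ne_top_iff_exists.mp h with ⟨q, hq⟩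
          rw [← hq, ← WithTop.coe_mul]
          exact WithTop.coe_ne_top
        rw [hT] at hF_le
        exact hfin (top_le_iff.mp hF_le)
      have hgtop : g U = ⊤ := by
        rw [hgU, hT]
        exact WithTop.mul_top (by exact_mod_cast ne_of_gt hcpos)
      rw [hgtop, hfX]
      refine ⟨le_refl _, ?_⟩
      rw [WithTop.mul_top]
      have hKpos : (0 : ℚ) < n * α ^ (n + 1) := by positivity
      exact_mod_cast ne_of_gt hKpos
    · -- f ind finite
      rcases WithTop.ne_top_iff_exists.mp hT with ⟨r, hr⟩
      have hr0 : 0 ≤ r := by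
        have := hnonneg ind
        rw [← hr] at this
        exact_mod_cast this
      have hfXne : f X ≠ ⊤ := by
        apply ne_top_of_le_ne_top _ hX_le
        rw [← hr, ← WithTop.coe_mul]
        exact WithTop.coe_ne_top
      rcases WithTop.ne_top_iff_exists.mp hfXne with ⟨q, hq⟩
      have hq0 : 0 ≤ q := by
        have := hnonneg X
        rw [← hq] at this
        exact_mod_cast this
      have hrq : r ≤ α * q := by
        rw [← hr, ← hq, ← WithTop.coe_mul, WithTop.coe_le_coe] at hF_le
        exact hF_le
      have hqr : q ≤ α * r := by
        rw [← hq, ← hr, ← WithTop.coe_mul, WithTop.coe_le_coe] at hX_le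
        exact hX_le
      have hgval : g U = ((c * r : ℚ) : WithTop ℚ) := by
        rw [hgU, ← hr, ← WithTop.coe_mul]
      rw [hgval, ← hq]
      constructor
      · rw [WithTop.coe_le_coe]
        calc c * r ≤ α⁻¹ * r := mul_le_mul_of_nonneg_right hcinv hr0
          _ ≤ α⁻¹ * (α * q) := by
              apply mul_le_mul_of_nonneg_left hrq
              positivity
          _ = q := by field_simp
      · rw [← WithTop.coe_mul, WithTop.coe_le_coe]
        calc q ≤ α * r := hqr
          _ ≤ ((n * α ^ (n + 1)) * c) * r := mul_le_mul_of_nonneg_right hKc hr0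
          _ = n * α ^ (n + 1) * (c * r) := by ring
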